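/- arXiv:2009.01626 — 3 statements merged into one kernel-verified Lean document; each statement's English description precedes it below -/
import Mathlib

section
/- Let V ⊆ H be a continuous dense embedding of Hilbert spaces with ordering induced by a self-dual closed convex cone H₊, and let A : V → V* be linear, bounded, coercive, and T-monotone (⟨Au⁺, u⁻⟩ ≤ 0 for all u ∈ V). Then for f₁, f₂ ∈ V* with f₁ ≤ f₂ (meaning f₂ − f₁ ∈ V*₊), the solutions z₁, z₂ of Az₁ = f₁ and Az₂ = f₂ satisfy z₁ ≤ z₂. -/
open scoped RealInnerProductSpace

/-- comparison of solutions of `Az = f` for a bounded, coercive,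
T-monotone linear operator `A : V → V*`: if `f₁ ≤ f₂` in the dual ordering induced by the
closed convex cone `C` (with `u ↦ u⁺` the positive-part map, `u⁻ := u⁺ - u`),
then `z₁ ≤ z₂`, i.e. `z₂ - z₁ ∈ C`. -/
theorem stmt1 {V : Type*} [NormedAddCommGroup V] [InnerProductSpace ℝ V] [CompleteSpace V]
    (C : Set V) (hCclosed : IsClosed C) (hCconv : Convex ℝ C)
    (hCcone : ∀ (c : ℝ) (x : V), 0 ≤ c → x ∈ C → c • x ∈ C)
    (pos : V → V) (hposmem : ∀ u, pos u ∈ C) (hposneg : ∀ u, pos u - u ∈ C)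
    (A : V →ₗ[ℝ] StrongDual ℝ V)
    (Cb Ca : ℝ) (hCa : 0 < Ca)
    (hbdd : ∀ u v : V, A u v ≤ Cb * ‖u‖ * ‖v‖)
    (hcoer : ∀ u : V, Ca * ‖u‖ ^ 2 ≤ A u u)
    (hTmon : ∀ u : V, A (pos u) (pos u - u) ≤ 0)
    (f₁ f₂ : StrongDual ℝ V)
    (hord : ∀ v ∈ C, 0 ≤ f₂ v - f₁ v)
    (z₁ z₂ : V) (hz₁ : A z₁ = f₁) (hz₂ : A z₂ = f₂) :
    z₂ - z₁ ∈ C := by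
  set d := z₂ - z₁ with hd
  set m := pos d - d with hm
  have hAd : A d = f₂ - f₁ := by rw [hd, map_sub, hz₁, hz₂]
  have h1 : 0 ≤ A d m := by
    have h := hord m (hposneg d)
    rw [hAd, ContinuousLinearMap.sub_apply]
    exact h
  have h2 : A (pos d) m ≤ 0 := hTmon d
  have h3 : A m m ≤ 0 := by
    have hAm : A m = A (pos d) - A d := by rw [hm]; exact map_sub A _ _
    rw [hAm, ContinuousLinearMap.sub_apply]
    linarith
  have h4 : Ca * ‖m‖ ^ 2 ≤ 0 := le_trans (hcoer m) h3
  have hm0 : m = 0 := by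
    have h5 : ‖m‖ ^ 2 ≤ 0 := by nlinarith
    have h6 : ‖m‖ = 0 := by
      have h7 : ‖m‖ ^ 2 = 0 := le_antisymm h5 (sq_nonneg ‖m‖)
      exact pow_eq_zero_iff two_ne_zero |>.mp h7
    exact norm_eq_zero.mp h6
  have hdp : d = pos d := by
    have := sub_eq_zero.mp (hm ▸ hm0 : pos d - d = 0)
    exact this.symm
  rw [hdp]
  exact hposmem d
end

section
/- Continuous dependence of the obstacle VI solution on the obstacle: with A bounded (constant C_b) coercive (constant C_a) and T-monotone, if u_i = S(f, φ_i) solves the VI with obstacle φ_i ∈ V (i = 1,2) and common source f ∈ V*, then ‖u₁ − u₂‖_V ≤ C ‖φ₁ − φ₂‖_V for a constant C depending only on C_a, C_b (one may take C = 1 + (1 + C_b/C_a) in a suitable form; it suffices to prove existence of some constant C independent of f, φ₁, φ₂). -/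
open scoped RealInnerProductSpace

/-- continuous dependence of the obstacle VI solution on the obstacle:
there is a constant `Cc` depending only on the operator `A` (through its boundedness and
coercivity constants `C_b`, `C_a`) such that for any common source `f` and obstacles
`φ₁, φ₂`, the VI solutions satisfy `‖u₁ - u₂‖ ≤ Cc * ‖φ₁ - φ₂‖`. -/
theorem stmt3 {V : Type*} [NormedAddCommGroup V] [InnerProductSpace ℝ V] [CompleteSpace V]
    (C : Set V) (hCclosed : IsClosed C) (hCconv : Convex ℝ C)
    (hCcone : ∀ (c : ℝ) (x : V), 0 ≤ c → x ∈ C → c • x ∈ C)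
    (pos : V → V) (hposmem : ∀ u, pos u ∈ C) (hposneg : ∀ u, pos u - u ∈ C)
    (A : V →ₗ[ℝ] StrongDual ℝ V)
    (Cb Ca : ℝ) (hCa : 0 < Ca)
    (hbdd : ∀ u v : V, A u v ≤ Cb * ‖u‖ * ‖v‖)
    (hcoer : ∀ u : V, Ca * ‖u‖ ^ 2 ≤ A u u)
    (hTmon : ∀ u : V, A (pos u) (pos u - u) ≤ 0) :
    ∃ Cc : ℝ, 0 < Cc ∧
      ∀ (f : StrongDual ℝ V) (φ₁ φ₂ u₁ u₂ : V),
        (φ₁ - u₁ ∈ C) → (∀ v : V, φ₁ - v ∈ C → A u₁ (u₁ - v) - f (u₁ - v) ≤ 0) →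
        (φ₂ - u₂ ∈ C) → (∀ v : V, φ₂ - v ∈ C → A u₂ (u₂ - v) - f (u₂ - v) ≤ 0) →
        ‖u₁ - u₂‖ ≤ Cc * ‖φ₁ - φ₂‖ := by

  refine ⟨(|Cb| + 1) / Ca, by positivity, fun f φ₁ φ₂ u₁ u₂ h1m h1 h2m h2 => ?_⟩
  set w := u₁ - u₂ with hw
  set d := φ₁ - φ₂ with hd
  have key1 : φ₁ - (u₂ + d) = φ₂ - u₂ := by rw [hd]; abel
  have key2 : φ₂ - (u₁ + -d) = φ₁ - u₁ := by rw [hd]; abel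
  have ha := h1 (u₂ + d) (by rw [key1]; exact h2m)
  have hb := h2 (u₁ + -d) (by rw [key2]; exact h1m)
  have e1 : u₁ - (u₂ + d) = w - d := by rw [hw, hd]; abel
  have e2 : u₂ - (u₁ + -d) = -(w - d) := by rw [hw, hd]; abel
  rw [e1] at ha
  rw [e2] at hb
  simp only [map_neg] at hb
  -- combine: A w (w - d) ≤ 0
  have hAw : A w (w - d) ≤ 0 := by
    have : A w (w - d) = (A u₁ (w - d) - f (w - d)) + (A u₂ (-(w - d)) - f (-(w - d))) := by
      rw [hw]; simp [map_sub, map_neg]; ring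
    rw [this]
    simp only [map_neg] at *
    linarith
  have hcw := hcoer w
  have hbw := hbdd w d
  have hAwd : A w w ≤ Cb * ‖w‖ * ‖d‖ := by
    have : A w (w - d) = A w w - A w d := by simp [map_sub]
    rw [this] at hAw
    linarith
  have hkey : Ca * ‖w‖ ^ 2 ≤ (|Cb| + 1) * ‖w‖ * ‖d‖ := by
    have h1 : Cb * ‖w‖ * ‖d‖ ≤ (|Cb| + 1) * ‖w‖ * ‖d‖ := by
      have := le_abs_self Cb
      nlinarith [mul_nonneg (norm_nonneg w) (norm_nonneg d)]
    linarith
  rcases eq_or_lt_of_le (norm_nonneg w) with hz | hz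
  · rw [← hz]; positivity
  · rw [div_mul_eq_mul_div, le_div_iff₀ hCa]
    nlinarith
end

section
/- The thermoforming obstacle map is completely continuous: with Φ(u) := Φ₀ + L T(u), where T(u) ∈ H¹(0,1) is the unique weak solution of kT − T'' = g(LT + Φ₀ − u) with Neumann boundary conditions, g Lipschitz, bounded, decreasing, and L : V → V bounded linear, if u_n → u in V = H¹(0,1) then Φ(u_n) → Φ(u) strongly in V. -/
open MeasureTheory Filter Topology
open scoped RealInnerProductSpace ENNReal

lemma weak_seq_compact {V : Type*} [NormedAddCommGroup V] [InnerProductSpace ℝ V]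
    [CompleteSpace V] (T : ℕ → V) (C : ℝ) (hC : ∀ n, ‖T n‖ ≤ C) :
    ∃ φ : ℕ → ℕ, StrictMono φ ∧ ∃ l : V,
      ∀ z : V, Tendsto (fun n => ⟪T (φ n), z⟫) atTop (𝓝 ⟪l, z⟫) := by
  have hC0 : (0:ℝ) ≤ C := le_trans (norm_nonneg _) (hC 0)
  -- Bolzano–Weierstrass in the metrizable compact set `Π j, [-C², C²]`
  have hKc : IsCompact (Set.pi Set.univ fun _ : ℕ => Set.Icc (-(C*C)) (C*C)) :=
    isCompact_univ_pi fun _ => isCompact_Icc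
  have hmem : ∀ n, (fun j => ⟪T n, T j⟫) ∈ Set.pi Set.univ fun _ : ℕ => Set.Icc (-(C*C)) (C*C) := by
    intro n j _
    have h := abs_le.mp (abs_real_inner_le_norm (T n) (T j))
    have h1 := (abs_real_inner_le_norm (T n) (T j))
    have h2 : ‖T n‖ * ‖T j‖ ≤ C * C :=
      mul_le_mul (hC n) (hC j) (norm_nonneg _) hC0
    constructor <;> nlinarith [h.1, h.2]
  obtain ⟨a, -, φ, hφ, hconv⟩ := hKc.isSeqCompact hmem
  rw [tendsto_pi_nhds] at hconv
  refine ⟨φ, hφ, ?_⟩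
  set W : Submodule ℝ V := (Submodule.span ℝ (Set.range T)).topologicalClosure with hWdef
  haveI : CompleteSpace W :=
    (Submodule.isClosed_topologicalClosure _).completeSpace_coe
  have hTmem : ∀ n, T n ∈ W := fun n =>
    Submodule.le_topologicalClosure _ (Submodule.subset_span ⟨n, rfl⟩)
  -- convergence on the span
  have hspan : ∀ z ∈ Submodule.span ℝ (Set.range T),
      ∃ r, Tendsto (fun n => ⟪T (φ n), z⟫) atTop (𝓝 r) := by
    intro z hz
    induction hz using Submodule.span_induction with
    | mem x hx =>
      obtain ⟨j, rfl⟩ := hx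
      exact ⟨a j, hconv j⟩
    | zero => exact ⟨0, by simpa using (tendsto_const_nhds : Tendsto (fun _ : ℕ => (0:ℝ)) atTop _)⟩
    | add x y hx hy ihx ihy =>
      obtain ⟨r, hr⟩ := ihx; obtain ⟨s, hs⟩ := ihy
      exact ⟨r + s, by simpa [inner_add_right] using hr.add hs⟩
    | smul c x hx ihx =>
      obtain ⟨r, hr⟩ := ihx
      exact ⟨c * r, by simpa [inner_smul_right] using hr.const_mul c⟩
  -- convergence on the closure
  have hW : ∀ z ∈ W, ∃ r, Tendsto (fun n => ⟪T (φ n), z⟫) atTop (𝓝 r) := by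
    intro z hz
    have hcs : CauchySeq (fun n => ⟪T (φ n), z⟫) := by
      rw [Metric.cauchySeq_iff]
      intro ε hε
      have hδ : 0 < ε / (3 * (C + 1)) := by positivity
      have hzc : z ∈ closure ((Submodule.span ℝ (Set.range T) : Submodule ℝ V) : Set V) := hz
      obtain ⟨z', hz'mem, hz'dist⟩ := Metric.mem_closure_iff.mp hzc _ hδ
      obtain ⟨r, hr⟩ := hspan z' hz'mem
      obtain ⟨N, hN⟩ := (Metric.cauchySeq_iff.mp hr.cauchySeq) (ε/3) (by positivity)
      refine ⟨N, fun m hm n hn => ?_⟩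
      have key : ∀ p : ℕ, |⟪T (φ p), z⟫ - ⟪T (φ p), z'⟫| ≤ C * (ε / (3 * (C + 1))) := by
        intro p
        rw [← inner_sub_right]
        refine (abs_real_inner_le_norm _ _).trans ?_
        have : ‖z - z'‖ ≤ ε / (3 * (C + 1)) := by
          rw [← dist_eq_norm]; exact le_of_lt hz'dist
        exact mul_le_mul (hC _) this (norm_nonneg _) hC0
      have hCe : C * (ε / (3 * (C + 1))) < ε / 3 := by
        have he : C * (ε / (3 * (C + 1))) = (C * ε) / (3 * (C + 1)) := by ring
        rw [he, div_lt_div_iff₀ (by positivity) (by norm_num)]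
        nlinarith
      have h3 := hN m hm n hn
      rw [Real.dist_eq] at h3 ⊢
      have k1 := key m; have k2 := key n
      calc |⟪T (φ m), z⟫ - ⟪T (φ n), z⟫|
          ≤ |⟪T (φ m), z⟫ - ⟪T (φ m), z'⟫| + |⟪T (φ m), z'⟫ - ⟪T (φ n), z'⟫|
            + |⟪T (φ n), z'⟫ - ⟪T (φ n), z⟫| := by
            have := abs_sub_le (⟪T (φ m), z⟫) (⟪T (φ m), z'⟫) (⟪T (φ n), z⟫)
            have := abs_sub_le (⟪T (φ m), z'⟫) (⟪T (φ n), z'⟫) (⟪T (φ n), z⟫)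
            linarith [abs_sub_le (⟪T (φ m), z⟫) (⟪T (φ m), z'⟫) (⟪T (φ n), z⟫),
              abs_sub_le (⟪T (φ m), z'⟫) (⟪T (φ n), z'⟫) (⟪T (φ n), z⟫)]
        _ < ε := by
            rw [abs_sub_comm (⟪T (φ n), z'⟫)] at *
            linarith
    exact cauchySeq_tendsto_of_complete hcs
  -- convergence everywhere via orthogonal projection
  have hall : ∀ z : V, ∃ r, Tendsto (fun n => ⟪T (φ n), z⟫) atTop (𝓝 r) := by
    intro z
    have hperp : z - (W.orthogonalProjectionOnto z : V) ∈ Wᗮ :=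
      W.sub_starProjection_mem_orthogonal z
    have key : ∀ n, ⟪T n, z⟫ = ⟪T n, (W.orthogonalProjectionOnto z : V)⟫ := by
      intro n
      have h0 : ⟪T n, z - (W.orthogonalProjectionOnto z : V)⟫ = 0 :=
        (Submodule.mem_orthogonal W _).mp hperp (T n) (hTmem n)
      rw [inner_sub_right] at h0; linarith
    obtain ⟨r, hr⟩ := hW _ (SetLike.coe_mem _)
    exact ⟨r, by simpa only [key] using hr⟩
  choose F hF using hall
  have Fadd : ∀ x y, F (x + y) = F x + F y := fun x y =>
    tendsto_nhds_unique (hF (x+y)) (by simpa [inner_add_right] using (hF x).add (hF y))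
  have Fsmul : ∀ (c : ℝ) (x : V), F (c • x) = c * F x := fun c x =>
    tendsto_nhds_unique (hF (c • x)) (by simpa [inner_smul_right] using (hF x).const_mul c)
  have Fbdd : ∀ x, ‖F x‖ ≤ C * ‖x‖ := by
    intro x
    rw [Real.norm_eq_abs]
    refine le_of_tendsto (hF x).abs (Eventually.of_forall fun n => ?_)
    exact (abs_real_inner_le_norm _ _).trans
      (mul_le_mul_of_nonneg_right (hC _) (norm_nonneg _))
  let f : V →L[ℝ] ℝ := LinearMap.mkContinuous
    { toFun := F, map_add' := Fadd, map_smul' := Fsmul } C Fbdd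
  refine ⟨(InnerProductSpace.toDual ℝ V).symm f, fun z => ?_⟩
  have : ⟪(InnerProductSpace.toDual ℝ V).symm f, z⟫ = f z :=
    InnerProductSpace.toDual_symm_apply
  rw [this]
  exact hF z
lemma inner_decomp {V E F : Type*} [NormedAddCommGroup V] [InnerProductSpace ℝ V]
    [NormedAddCommGroup E] [InnerProductSpace ℝ E]
    [NormedAddCommGroup F] [InnerProductSpace ℝ F]
    (ι : V →L[ℝ] E) (D : V →ₗ[ℝ] F)
    (hnorm : ∀ v : V, ‖v‖ ^ 2 = ‖ι v‖ ^ 2 + ‖D v‖ ^ 2) (a b : V) :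
    ⟪a, b⟫ = ⟪ι a, ι b⟫ + ⟪D a, D b⟫ := by
  have h1 := real_inner_eq_norm_add_mul_self_sub_norm_mul_self_sub_norm_mul_self_div_two a b
  have h2 := real_inner_eq_norm_add_mul_self_sub_norm_mul_self_sub_norm_mul_self_div_two (ι a) (ι b)
  have h3 := real_inner_eq_norm_add_mul_self_sub_norm_mul_self_sub_norm_mul_self_div_two (D a) (D b)
  have e1 := hnorm (a + b); have e2 := hnorm a; have e3 := hnorm b
  rw [map_add] at e1
  rw [map_add (f := D)] at e1
  rw [h1, h2, h3]
  simp only [pow_two] at e1 e2 e3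
  linarith

lemma lp_norm_le {α : Type*} [MeasurableSpace α] {μ : Measure α}
    (f a b : Lp ℝ 2 μ) (c : ℝ) (hc : 0 ≤ c)
    (h : ∀ᵐ x ∂μ, |(f : α → ℝ) x| ≤ c * (|(a : α → ℝ) x| + |(b : α → ℝ) x|)) :
    ‖f‖ ≤ c * (‖a‖ + ‖b‖) := by
  have habs : ∀ g : Lp ℝ 2 μ, ‖|g|‖ = ‖g‖ := by
    intro g
    refine le_antisymm ?_ ?_ <;>
      refine Lp.norm_le_norm_of_ae_le ?_ <;>
      filter_upwards [Lp.coeFn_abs g] with x hx <;>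
      simp [hx, Real.norm_eq_abs, abs_abs]
  have h1 : ‖f‖ ≤ ‖c • (|a| + |b|)‖ := by
    refine Lp.norm_le_norm_of_ae_le ?_
    filter_upwards [h, Lp.coeFn_smul c (|a| + |b|), Lp.coeFn_add |a| |b|,
      Lp.coeFn_abs a, Lp.coeFn_abs b] with x hx hsm hadd ha hb
    rw [Real.norm_eq_abs, Real.norm_eq_abs, hsm]
    simp only [Pi.smul_apply, smul_eq_mul, hadd, Pi.add_apply, ha, hb]
    have hnn : 0 ≤ c * (|(a : α → ℝ) x| + |(b : α → ℝ) x|) := by positivity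
    rw [abs_of_nonneg hnn]
    exact hx
  refine h1.trans ?_
  rw [norm_smul, Real.norm_eq_abs, abs_of_nonneg hc]
  have := norm_add_le (|a| : Lp ℝ 2 μ) |b|
  rw [habs, habs] at this
  exact mul_le_mul_of_nonneg_left this hc


set_option maxHeartbeats 1000000 in
/-- complete continuity of the thermoforming obstacle map
`Φ(u) = Φ₀ + L T(u)`, where `T(u) ∈ V` (with `V` abstracting `H¹(0,1)` via the embedding
`ι : V → L²((0,1))`, the derivative map `D`, the norm identity, and the compactness of the
embedding `H¹(0,1) ↪ L²(0,1)`) is the unique weak solution of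
`kT - T'' = g(LT + Φ₀ - u)` with Neumann boundary conditions, `g` Lipschitz, bounded and
decreasing, `L` bounded linear: if `u_n → u` in `V` then `Φ(u_n) → Φ(u)` strongly in `V`. -/
theorem stmt13
    {V : Type*} [NormedAddCommGroup V] [InnerProductSpace ℝ V] [CompleteSpace V]
    (μ : Measure ℝ) (hμ : μ = volume.restrict (Set.Ioo (0 : ℝ) 1))
    (ι : V →L[ℝ] Lp ℝ 2 μ) (D : V →ₗ[ℝ] Lp ℝ 2 μ)
    (hnorm : ∀ v : V, ‖v‖ ^ 2 = ‖ι v‖ ^ 2 + ‖D v‖ ^ 2)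
    -- compactness of the embedding H¹(0,1) ↪ L²(0,1): weak convergence in V gives
    -- strong convergence of the embedded sequence
    (hcompact : ∀ (vseq : ℕ → V) (l : V),
      (∀ z : V, Tendsto (fun n => ⟪vseq n, z⟫) atTop (nhds ⟪l, z⟫)) →
      Tendsto (fun n => ι (vseq n)) atTop (nhds (ι l)))
    (k : ℝ) (hk : 0 < k) (M Kg : ℝ)
    (g : ℝ → ℝ)
    (hgbdd : ∀ r : ℝ, 0 ≤ g r ∧ g r ≤ M)
    (hglip : ∀ a b : ℝ, |g a - g b| ≤ Kg * |a - b|)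
    (hgdec : Antitone g)
    (L : V →L[ℝ] V) (Φ₀ : V)
    (𝒯 : Lp ℝ 2 μ → V)
    -- `𝒯 u` is a weak solution of the temperature equation with datum `u` ...
    (hsol : ∀ u : Lp ℝ 2 μ, ∃ w : Lp ℝ 2 μ,
      ((w : ℝ → ℝ) =ᵐ[μ]
        fun x => g ((ι (L (𝒯 u)) : ℝ → ℝ) x + (ι Φ₀ : ℝ → ℝ) x - (u : ℝ → ℝ) x)) ∧
      ∀ v : V, k * ⟪ι (𝒯 u), ι v⟫ + ⟪D (𝒯 u), D v⟫ = ⟪w, ι v⟫)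
    -- ... and it is the unique one
    (huniq : ∀ (u : Lp ℝ 2 μ) (T : V), (∃ w : Lp ℝ 2 μ,
      ((w : ℝ → ℝ) =ᵐ[μ]
        fun x => g ((ι (L T) : ℝ → ℝ) x + (ι Φ₀ : ℝ → ℝ) x - (u : ℝ → ℝ) x)) ∧
      ∀ v : V, k * ⟪ι T, ι v⟫ + ⟪D T, D v⟫ = ⟪w, ι v⟫) → T = 𝒯 u)
    (useq : ℕ → V) (ulim : V)
    (hconv : Tendsto useq atTop (nhds ulim)) :
    Tendsto (fun n => Φ₀ + L (𝒯 (ι (useq n)))) atTop (nhds (Φ₀ + L (𝒯 (ι ulim)))) := by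
  haveI hfin : IsFiniteMeasure μ := by
    refine ⟨?_⟩
    rw [hμ, Measure.restrict_apply_univ]
    exact (Real.volume_Ioo (a := 0) (b := 1)).le.trans_lt (by simp)
  -- basic constants and facts
  have hM0 : 0 ≤ M := le_trans (hgbdd 0).1 (hgbdd 0).2
  have hKg0 : 0 ≤ Kg := by
    have := hglip 0 1
    simpa using le_trans (abs_nonneg _) this
  set c : ℝ := min k 1 with hcdef
  have hc : 0 < c := lt_min hk one_pos
  have hμ1 : (measureUnivNNReal μ : ℝ) ≤ 1 := by
    have h2 : μ Set.univ = 1 := by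
      rw [hμ, Measure.restrict_apply_univ, Real.volume_Ioo]; norm_num
    have h3 : measureUnivNNReal μ = 1 := by
      unfold measureUnivNNReal; rw [h2]; rfl
    rw [h3]; norm_num
  have hιle : ∀ v : V, ‖ι v‖ ≤ ‖v‖ := by
    intro v
    have h := hnorm v
    nlinarith [norm_nonneg (ι v), norm_nonneg v, norm_nonneg (D v), sq_nonneg (‖D v‖)]
  have hinner : ∀ a b : V, ⟪a, b⟫ = ⟪ι a, ι b⟫ + ⟪D a, D b⟫ :=
    inner_decomp ι D hnorm
  -- the chosen right-hand sides
  choose w hw using hsol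
  -- every w u has norm at most M
  have hwnorm : ∀ u : Lp ℝ 2 μ, ‖w u‖ ≤ M := by
    intro u
    have := Lp.norm_le_of_ae_bound (f := w u) hM0 ?_
    · refine this.trans ?_
      calc (measureUnivNNReal μ : ℝ) ^ ((2:ℝ≥0∞).toReal)⁻¹ * M ≤ 1 * M := by
            refine mul_le_mul_of_nonneg_right ?_ hM0
            refine Real.rpow_le_one (NNReal.coe_nonneg _) hμ1 (by norm_num)
        _ = M := one_mul M
    · filter_upwards [(hw u).1] with x hx
      rw [hx, Real.norm_eq_abs, abs_of_nonneg (hgbdd _).1]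
      exact (hgbdd _).2
  -- uniform bound on solutions
  have hbdd : ∀ u : Lp ℝ 2 μ, ‖𝒯 u‖ ≤ M / c := by
    intro u
    have heq := (hw u).2 (𝒯 u)
    rw [real_inner_self_eq_norm_sq, real_inner_self_eq_norm_sq] at heq
    have hle : k * ‖ι (𝒯 u)‖ ^ 2 + ‖D (𝒯 u)‖ ^ 2 ≤ M * ‖𝒯 u‖ := by
      rw [heq]
      calc ⟪w u, ι (𝒯 u)⟫ ≤ ‖w u‖ * ‖ι (𝒯 u)‖ := real_inner_le_norm _ _
        _ ≤ M * ‖𝒯 u‖ :=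
          mul_le_mul (hwnorm u) (hιle _) (norm_nonneg _) hM0
    have hcle : c * ‖𝒯 u‖ ^ 2 ≤ M * ‖𝒯 u‖ := by
      have h2 := hnorm (𝒯 u)
      have hck : c ≤ k := min_le_left _ _
      have hc1 : c ≤ 1 := min_le_right _ _
      nlinarith [sq_nonneg (‖ι (𝒯 u)‖), sq_nonneg (‖D (𝒯 u)‖)]
    by_contra hcon
    push_neg at hcon
    have h0 : 0 ≤ M / c := div_nonneg hM0 hc.le
    have hpos : 0 < ‖𝒯 u‖ := lt_of_le_of_lt h0 hcon
    have : M / c * c < ‖𝒯 u‖ * c := mul_lt_mul_of_pos_right hcon hc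
    rw [div_mul_cancel₀ _ hc.ne'] at this
    nlinarith
  -- main argument via subsequences
  apply Filter.tendsto_of_subseq_tendsto
  intro ns hns
  set S : ℕ → V := fun n => 𝒯 (ι (useq (ns n))) with hSdef
  obtain ⟨φ, hφ, l, hweakconv⟩ := weak_seq_compact S (M / c) (fun n => hbdd _)
  refine ⟨φ, ?_⟩
  have h1 : Tendsto (fun n => ι (S (φ n))) atTop (𝓝 (ι l)) := hcompact _ _ hweakconv
  have hLweak : ∀ z : V, Tendsto (fun n => ⟪L (S (φ n)), z⟫) atTop (𝓝 ⟪L l, z⟫) := by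
    intro z
    have h := hweakconv ((ContinuousLinearMap.adjoint L) z)
    have e : ∀ x : V, ⟪x, (ContinuousLinearMap.adjoint L) z⟫ = ⟪L x, z⟫ := fun x =>
      ContinuousLinearMap.adjoint_inner_right L x z
    simpa only [e] using h
  have h2 : Tendsto (fun n => ι (L (S (φ n)))) atTop (𝓝 (ι (L l))) := hcompact _ _ hLweak
  have hu : Tendsto (fun n => ι (useq (ns (φ n)))) atTop (𝓝 (ι ulim)) :=
    (ι.continuous.tendsto _).comp (hconv.comp (hns.comp hφ.tendsto_atTop))
  -- the limit right-hand side
  have hgcont : Continuous g := by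
    refine (LipschitzWith.of_dist_le_mul (K := ⟨Kg, hKg0⟩) (f := g) ?_).continuous
    intro x y
    rw [Real.dist_eq, Real.dist_eq]
    exact hglip x y
  have hMem : MemLp (fun x => g ((ι (L l) : ℝ → ℝ) x + (ι Φ₀ : ℝ → ℝ) x
      - ((ι ulim : Lp ℝ 2 μ) : ℝ → ℝ) x)) 2 μ := by
    refine MemLp.of_bound ?_ M ?_
    · exact hgcont.comp_aestronglyMeasurable
        (((Lp.aestronglyMeasurable _).add (Lp.aestronglyMeasurable _)).sub
          (Lp.aestronglyMeasurable _))
    · filter_upwards with x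
      rw [Real.norm_eq_abs, abs_of_nonneg (hgbdd _).1]
      exact (hgbdd _).2
  set w' : Lp ℝ 2 μ := hMem.toLp _ with hw'def
  have hw'ae : (w' : ℝ → ℝ) =ᵐ[μ] fun x => g ((ι (L l) : ℝ → ℝ) x + (ι Φ₀ : ℝ → ℝ) x
      - ((ι ulim : Lp ℝ 2 μ) : ℝ → ℝ) x) := MemLp.coeFn_toLp _
  -- strong L² convergence of the right-hand sides
  have hwnconv : Tendsto (fun n => w (ι (useq (ns (φ n))))) atTop (𝓝 w') := by
    have hkey : ∀ n, ‖w (ι (useq (ns (φ n)))) - w'‖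
        ≤ Kg * (‖ι (L (S (φ n))) - ι (L l)‖ + ‖ι (useq (ns (φ n))) - ι ulim‖) := by
      intro n
      refine lp_norm_le _ _ _ Kg hKg0 ?_
      filter_upwards [(hw (ι (useq (ns (φ n))))).1, hw'ae,
        Lp.coeFn_sub (w (ι (useq (ns (φ n))))) w',
        Lp.coeFn_sub (ι (L (S (φ n)))) (ι (L l)),
        Lp.coeFn_sub (ι (useq (ns (φ n)))) (ι ulim)] with x hwx hw'x hsub1 hsub2 hsub3
      rw [hsub1]
      simp only [Pi.sub_apply]
      rw [hwx, hw'x, hsub2, hsub3]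
      simp only [Pi.sub_apply]
      set A := (ι (L (S (φ n))) : ℝ → ℝ) x + (ι Φ₀ : ℝ → ℝ) x
        - ((ι (useq (ns (φ n))) : Lp ℝ 2 μ) : ℝ → ℝ) x
      set B := (ι (L l) : ℝ → ℝ) x + (ι Φ₀ : ℝ → ℝ) x - ((ι ulim : Lp ℝ 2 μ) : ℝ → ℝ) x
      refine (hglip A B).trans ?_
      refine mul_le_mul_of_nonneg_left ?_ hKg0
      have : A - B = ((ι (L (S (φ n))) : ℝ → ℝ) x - (ι (L l) : ℝ → ℝ) x)
          - (((ι (useq (ns (φ n))) : Lp ℝ 2 μ) : ℝ → ℝ) x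
            - ((ι ulim : Lp ℝ 2 μ) : ℝ → ℝ) x) := by
        simp only [A, B]; ring
      rw [this]
      exact abs_sub _ _
    rw [tendsto_iff_norm_sub_tendsto_zero]
    have hrhs : Tendsto (fun n => Kg * (‖ι (L (S (φ n))) - ι (L l)‖
        + ‖ι (useq (ns (φ n))) - ι ulim‖)) atTop (𝓝 0) := by
      have t1 : Tendsto (fun n => ‖ι (L (S (φ n))) - ι (L l)‖) atTop (𝓝 0) := by
        rw [← tendsto_iff_norm_sub_tendsto_zero]; exact h2
      have t2 : Tendsto (fun n => ‖ι (useq (ns (φ n))) - ι ulim‖) atTop (𝓝 0) := by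
        rw [← tendsto_iff_norm_sub_tendsto_zero]; exact hu
      simpa using (t1.add t2).const_mul Kg
    exact squeeze_zero (fun n => norm_nonneg _) hkey hrhs
  -- pass to the limit in the weak formulation
  have hleq : ∀ v : V, k * ⟪ι l, ι v⟫ + ⟪D l, D v⟫ = ⟪w', ι v⟫ := by
    intro v
    have hn : ∀ n, k * ⟪ι (S (φ n)), ι v⟫ + ⟪D (S (φ n)), D v⟫
        = ⟪w (ι (useq (ns (φ n)))), ι v⟫ := fun n => (hw _).2 v
    have t1 : Tendsto (fun n => ⟪ι (S (φ n)), ι v⟫) atTop (𝓝 ⟪ι l, ι v⟫) :=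
      h1.inner tendsto_const_nhds
    have t2 : Tendsto (fun n => ⟪D (S (φ n)), D v⟫) atTop (𝓝 ⟪D l, D v⟫) := by
      have hv := hweakconv v
      have e : ∀ x : V, ⟪D x, D v⟫ = ⟪x, v⟫ - ⟪ι x, ι v⟫ := fun x => by
        rw [hinner x v]; ring
      rw [e l]
      simp only [e]
      exact hv.sub t1
    have hL : Tendsto (fun n => k * ⟪ι (S (φ n)), ι v⟫ + ⟪D (S (φ n)), D v⟫)
        atTop (𝓝 (k * ⟪ι l, ι v⟫ + ⟪D l, D v⟫)) := (t1.const_mul k).add t2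
    have hR : Tendsto (fun n => ⟪w (ι (useq (ns (φ n)))), ι v⟫) atTop (𝓝 ⟪w', ι v⟫) :=
      hwnconv.inner tendsto_const_nhds
    have he : (fun n => k * ⟪ι (S (φ n)), ι v⟫ + ⟪D (S (φ n)), D v⟫)
        = fun n => ⟪w (ι (useq (ns (φ n)))), ι v⟫ := funext hn
    rw [he] at hL
    exact tendsto_nhds_unique hL hR
  have hl : l = 𝒯 (ι ulim) := huniq (ι ulim) l ⟨w', hw'ae, hleq⟩
  -- strong convergence in V
  have hdiff : ∀ n (v : V), k * ⟪ι (S (φ n) - l), ι v⟫ + ⟪D (S (φ n) - l), D v⟫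
      = ⟪w (ι (useq (ns (φ n)))) - w', ι v⟫ := by
    intro n v
    have e1 := (hw (ι (useq (ns (φ n))))).2 v
    have e2 := hleq v
    rw [map_sub, map_sub, inner_sub_left, inner_sub_left, inner_sub_left]
    ring_nf
    linarith
  have hstrongnorm : ∀ n, c * ‖S (φ n) - l‖ ≤ ‖w (ι (useq (ns (φ n)))) - w'‖ := by
    intro n
    set e := S (φ n) - l with hedef
    have heq := hdiff n e
    rw [real_inner_self_eq_norm_sq, real_inner_self_eq_norm_sq] at heq
    have hle : k * ‖ι e‖ ^ 2 + ‖D e‖ ^ 2 ≤ ‖w (ι (useq (ns (φ n)))) - w'‖ * ‖e‖ := by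
      rw [heq]
      calc ⟪w (ι (useq (ns (φ n)))) - w', ι e⟫
          ≤ ‖w (ι (useq (ns (φ n)))) - w'‖ * ‖ι e‖ := real_inner_le_norm _ _
        _ ≤ ‖w (ι (useq (ns (φ n)))) - w'‖ * ‖e‖ :=
          mul_le_mul_of_nonneg_left (hιle _) (norm_nonneg _)
    have hcle : c * ‖e‖ ^ 2 ≤ ‖w (ι (useq (ns (φ n)))) - w'‖ * ‖e‖ := by
      have h2 := hnorm e
      have hck : c ≤ k := min_le_left _ _
      have hc1 : c ≤ 1 := min_le_right _ _
      nlinarith [sq_nonneg (‖ι e‖), sq_nonneg (‖D e‖)]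
    rcases eq_or_lt_of_le (norm_nonneg e) with h0 | h0
    · rw [← h0, mul_zero]; exact norm_nonneg _
    · nlinarith
  have hstrong : Tendsto (fun n => S (φ n)) atTop (𝓝 l) := by
    rw [tendsto_iff_norm_sub_tendsto_zero]
    refine squeeze_zero (g := fun n => ‖w (ι (useq (ns (φ n)))) - w'‖ / c)
      (fun n => norm_nonneg _) (fun n => ?_) ?_
    · exact (le_div_iff₀' hc).mpr (hstrongnorm n)
    · have : Tendsto (fun n => ‖w (ι (useq (ns (φ n)))) - w'‖) atTop (𝓝 0) := by
        rw [← tendsto_iff_norm_sub_tendsto_zero]; exact hwnconv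
      simpa using this.div_const c
  have hfinal : Tendsto (fun n => Φ₀ + L (S (φ n))) atTop (𝓝 (Φ₀ + L l)) :=
    tendsto_const_nhds.add ((L.continuous.tendsto _).comp hstrong)
  rw [hl] at hfinal
  exact hfinal
end
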